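/- arXiv:1503.04644 — 3 statements merged into one kernel-verified Lean document; each statement's English description precedes it below -/
import Mathlib

section
/- Let m ≥ 2, 0 ≤ β < 1, let k(z) = z + ∑_{n≥2} k_n z^n be bi-univalent with k₂ ≠ 0 and k₃ ≠ 0, and let f(z) = z + ∑_{n≥2} a_n z^n belong to the class BR^k(m; β). Then |a₃| ≤ m(1−β)/|k₃|. -/
open MeasureTheory Set Metric Complex

noncomputable section

/-- The `n`-th MacLaurin coefficient of `f`, i.e. `f⁽ⁿ⁾(0)/n!`. -/
def mc (f : ℂ → ℂ) (n : ℕ) : ℂ := iteratedDeriv n f 0 / (n.factorial : ℂ)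

/-- The open unit disk in `ℂ`. -/
def unitDisk : Set ℂ := Metric.ball (0 : ℂ) 1

/-- The kernel `(1 - z e^{it})/(1 + z e^{it})`. -/
def pmKernel (z : ℂ) (t : ℝ) : ℂ :=
  (1 - z * Complex.exp (t * Complex.I)) / (1 + z * Complex.exp (t * Complex.I))

/-- The class `P_m` of functions with bounded boundary rotation: `p` is analytic on the unit
disk, `p 0 = 1`, and `p` is represented against a finite signed Borel measure
`μ = μp - μn` on `[0, 2π]` with `μ([0,2π]) = 1` and total variation `‖μ‖ ≤ m/2`. -/
def MemPm (m : ℝ) (p : ℂ → ℂ) : Prop :=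
  AnalyticOnNhd ℂ p unitDisk ∧ p 0 = 1 ∧
  ∃ μp μn : Measure ℝ, IsFiniteMeasure μp ∧ IsFiniteMeasure μn ∧
    (μp (Set.Icc 0 (2 * Real.pi))).toReal - (μn (Set.Icc 0 (2 * Real.pi))).toReal = 1 ∧
    (μp (Set.Icc 0 (2 * Real.pi))).toReal + (μn (Set.Icc 0 (2 * Real.pi))).toReal ≤ m / 2 ∧
    ∀ z ∈ unitDisk, p z =
      (∫ t in Set.Icc 0 (2 * Real.pi), pmKernel z t ∂μp) -
      (∫ t in Set.Icc 0 (2 * Real.pi), pmKernel z t ∂μn)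

/-- `p ∈ P_m(β)` iff `p = β + (1 - β) q` on the unit disk for some `q ∈ P_m`. -/
def MemPmBeta (m β : ℝ) (p : ℂ → ℂ) : Prop :=
  ∃ q : ℂ → ℂ, MemPm m q ∧ ∀ z ∈ unitDisk, p z = (β : ℂ) + (1 - (β : ℂ)) * q z

/-- `f` and `g` form a bi-univalent pair: `f` is analytic and injective on the unit disk with
`f 0 = 0`, `f' 0 = 1`, and `g` is the univalent analytic continuation of `f⁻¹` to the unit
disk: `g` is analytic and injective on the unit disk, `g 0 = 0`, and `f (g w) = w` for
`|w| < 1/4`. -/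
def BiUnivalentPair (f g : ℂ → ℂ) : Prop :=
  AnalyticOnNhd ℂ f unitDisk ∧ f 0 = 0 ∧ deriv f 0 = 1 ∧ Set.InjOn f unitDisk ∧
  AnalyticOnNhd ℂ g unitDisk ∧ Set.InjOn g unitDisk ∧ g 0 = 0 ∧
  ∀ w : ℂ, ‖w‖ < 1 / 4 → f (g w) = w

/-- MacLaurin coefficients of `(f ∗ k)(z)/z`: the constant term is `1` and the coefficient of
`z^n` for `n ≥ 1` is `a_{n+1} k_{n+1}`. -/
def brCoeff (f k : ℂ → ℂ) (n : ℕ) : ℂ := if n = 0 then 1 else mc f (n + 1) * mc k (n + 1)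

/-- The function `Φ(z) = 1 + ∑_{n≥2} a_n k_n z^{n-1}`, i.e. `(f ∗ k)(z)/z`. -/
def brFun (f k : ℂ → ℂ) (z : ℂ) : ℂ := ∑' n : ℕ, brCoeff f k n * z ^ n

/-- `f ∈ BR^k(m; β)`: `f` is bi-univalent with inverse `g`, and the series
`Φ(z) = 1 + ∑_{n≥2} a_n k_n z^{n-1}` and `Ψ(w) = 1 + ∑_{n≥2} b_n k_n w^{n-1}` converge on
the unit disk and define functions of class `P_m(β)`. -/
def MemBR (m β : ℝ) (k f g : ℂ → ℂ) : Prop :=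
  BiUnivalentPair f g ∧
  (∀ z ∈ unitDisk, Summable fun n : ℕ => brCoeff f k n * z ^ n) ∧
  (∀ w ∈ unitDisk, Summable fun n : ℕ => brCoeff g k n * w ^ n) ∧
  MemPmBeta m β (brFun f k) ∧ MemPmBeta m β (brFun g k)


open intervalIntegral in

lemma expIntL1 (j : ℤ) : ∫ θ in Icc (0:ℝ) (2*Real.pi), Complex.exp ((j:ℂ) * Complex.I * θ)
    = if j = 0 then (2*Real.pi : ℂ) else 0 := by
  rw [MeasureTheory.integral_Icc_eq_integral_Ioc, ← intervalIntegral.integral_of_le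
    (by positivity : (0:ℝ) ≤ 2*Real.pi)]
  rcases eq_or_ne j 0 with h | h
  · simp [h]
  · rw [if_neg h]
    have hc : (j:ℂ) * Complex.I ≠ 0 := by
      simp [Complex.I_ne_zero, h]
    rw [integral_exp_mul_complex hc]
    have h1 : Complex.exp ((j:ℂ) * Complex.I * ((2*Real.pi:ℝ):ℂ)) = 1 := by
      rw [show (j:ℂ) * Complex.I * ((2*Real.pi:ℝ):ℂ) = (j:ℂ) * (2 * Real.pi * Complex.I) by
        push_cast; ring]
      exact Complex.exp_int_mul_two_pi_mul_I j
    rw [h1]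
    simp

lemma keyInt (c : ℕ → ℂ) (hc : Summable fun n => ‖c n‖ * (1/2:ℝ)^n) :
    ∫ θ in Icc (0:ℝ) (2*Real.pi),
      (∑' n : ℕ, c n * ((1/2:ℂ) * Complex.exp ((θ:ℂ) * Complex.I))^n)
        * Complex.exp ((-2:ℂ) * Complex.I * θ)
    = (Real.pi:ℂ)/2 * c 2 := by
  have hpt : ∀ θ : ℝ,
      (∑' n : ℕ, c n * ((1/2:ℂ) * Complex.exp ((θ:ℂ) * Complex.I))^n)
        * Complex.exp ((-2:ℂ) * Complex.I * θ)
      = ∑' n : ℕ, c n * (1/2:ℂ)^n * Complex.exp ((((n:ℤ) - 2 : ℤ):ℂ) * Complex.I * θ) := by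
    intro θ
    rw [← tsum_mul_right]
    congr 1; funext n
    rw [mul_pow, ← Complex.exp_nat_mul, ← mul_assoc, mul_assoc _ _ (Complex.exp _),
      ← Complex.exp_add]
    congr 2
    push_cast; ring
  simp_rw [hpt]
  rw [← MeasureTheory.integral_tsum_of_summable_integral_norm]
  · rw [tsum_eq_single 2 ?_]
    · rw [MeasureTheory.integral_const_mul, expIntL1]
      norm_num; ring
    · intro n hn
      rw [MeasureTheory.integral_const_mul, expIntL1, if_neg (by omega), mul_zero]
  · intro n
    apply Continuous.integrableOn_Icc
    exact continuous_const.mul (Complex.continuous_exp.comp (by continuity))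
  · have hnorm : ∀ n : ℕ, (∫ θ in Icc (0:ℝ) (2*Real.pi),
        ‖c n * (1/2:ℂ)^n * Complex.exp ((((n:ℤ) - 2 : ℤ):ℂ) * Complex.I * θ)‖)
        = (2*Real.pi) * (‖c n‖ * (1/2:ℝ)^n) := by
      intro n
      have : ∀ θ : ℝ, ‖c n * (1/2:ℂ)^n * Complex.exp ((((n:ℤ) - 2 : ℤ):ℂ) * Complex.I * θ)‖
          = ‖c n‖ * (1/2:ℝ)^n := by
        intro θ
        rw [norm_mul, norm_mul, Complex.norm_exp]
        simp [Complex.mul_re]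
      simp_rw [this]
      rw [MeasureTheory.setIntegral_const]
      simp [Real.volume_Icc, ENNReal.toReal_ofReal Real.two_pi_pos.le, Real.pi_pos.le]
    simp_rw [hnorm]
    exact hc.mul_left _

noncomputable def kc (t : ℝ) (n : ℕ) : ℂ :=
  if n = 0 then 1 else 2 * (-Complex.exp ((t:ℝ) * Complex.I))^n

lemma kc_norm (t : ℝ) (n : ℕ) : ‖kc t n‖ ≤ 2 := by
  rcases eq_or_ne n 0 with h | h
  · simp [kc, h]
  · simp only [kc, if_neg h, norm_mul, norm_pow, norm_neg,
      Complex.norm_exp_ofReal_mul_I, one_pow, mul_one]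
    norm_num

lemma kernel_tsum (t : ℝ) (z : ℂ) (hz : ‖z‖ < 1) :
    pmKernel z t = ∑' n : ℕ, kc t n * z ^ n := by
  set w : ℂ := z * Complex.exp ((t:ℝ) * Complex.I) with hw
  have hwn : ‖w‖ < 1 := by
    rw [hw, norm_mul, Complex.norm_exp_ofReal_mul_I, mul_one]
    exact hz
  have hne : (1 : ℂ) + w ≠ 0 := by
    intro h
    have : w = -1 := by linear_combination h
    rw [this] at hwn; simp at hwn
  have hgs : Summable fun n : ℕ => (-w) ^ n := summable_geometric_of_norm_lt_one (by simpa using hwn)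
  have hg : ∑' n : ℕ, (-w) ^ n = (1 + w)⁻¹ := by
    rw [tsum_geometric_of_norm_lt_one (by simpa using hwn)]
    ring_nf
  have hterm : ∀ n : ℕ, kc t n * z ^ n = 2 * (-w)^n - (if n = 0 then 1 else 0) := by
    intro n
    rcases eq_or_ne n 0 with h | h
    · simp [kc, h]; norm_num
    · simp only [kc, if_neg h, hw, sub_zero]
      rw [show -(z * Complex.exp ((t:ℝ)*Complex.I))
          = (-Complex.exp ((t:ℝ)*Complex.I)) * z by ring, mul_pow]
      ring
  calc pmKernel z t = 2 * (1+w)⁻¹ - 1 := by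
        unfold pmKernel
        rw [← hw]
        field_simp
        ring
    _ = ∑' n : ℕ, (2 * (-w)^n - (if n = 0 then 1 else 0)) := by
        rw [Summable.tsum_sub (hgs.mul_left 2) ⟨1, hasSum_ite_eq 0 1⟩, tsum_mul_left, hg, tsum_ite_eq]
    _ = ∑' n : ℕ, kc t n * z ^ n := by
        congr 1; funext n; rw [hterm n]

lemma Znorm (θ : ℝ) : ‖(1/2:ℂ) * Complex.exp ((θ:ℂ) * Complex.I)‖ = 1/2 := by
  rw [norm_mul, Complex.norm_exp_ofReal_mul_I, mul_one]
  norm_num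

lemma kc_summable (t : ℝ) : Summable fun n => ‖kc t n‖ * (1/2:ℝ)^n := by
  apply Summable.of_nonneg_of_le (fun n => by positivity)
    (fun n => mul_le_mul_of_nonneg_right (kc_norm t n) (by positivity))
  exact (summable_geometric_of_lt_one (by norm_num) (by norm_num)).mul_left 2

lemma pmInner (t : ℝ) :
    ∫ θ in Icc (0:ℝ) (2*Real.pi),
      pmKernel ((1/2:ℂ) * Complex.exp ((θ:ℂ) * Complex.I)) t
        * Complex.exp ((-2:ℂ) * Complex.I * θ)
    = (Real.pi:ℂ)/2 * kc t 2 := by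
  have h : ∀ θ : ℝ, pmKernel ((1/2:ℂ) * Complex.exp ((θ:ℂ) * Complex.I)) t
      = ∑' n : ℕ, kc t n * ((1/2:ℂ) * Complex.exp ((θ:ℂ) * Complex.I))^n := by
    intro θ
    exact kernel_tsum t _ (by rw [Znorm]; norm_num)
  simp_rw [h]
  exact keyInt (kc t) (kc_summable t)

lemma pmInner_norm (t : ℝ) : ‖(Real.pi:ℂ)/2 * kc t 2‖ = Real.pi := by
  rw [norm_mul]
  simp only [kc, if_neg (by norm_num : (2:ℕ) ≠ 0), norm_mul, norm_pow, norm_neg,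
    Complex.norm_exp_ofReal_mul_I, one_pow, mul_one, norm_div]
  simp [Complex.norm_real, abs_of_pos Real.pi_pos]

lemma kernel_cont : Continuous (fun p : ℝ × ℝ =>
    pmKernel ((1/2:ℂ) * Complex.exp ((p.1:ℂ) * Complex.I)) p.2
      * Complex.exp ((-2:ℂ) * Complex.I * p.1)) := by
  apply Continuous.mul
  · unfold pmKernel
    apply Continuous.div
    · fun_prop
    · fun_prop
    · intro p h
      have h2 : ((1/2:ℂ) * Complex.exp ((p.1:ℂ) * Complex.I)) * Complex.exp ((p.2:ℝ) * Complex.I)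
          = -1 := by linear_combination h
      have h3 := congrArg (‖·‖) h2
      rw [norm_mul, norm_neg, norm_one] at h3
      have h4 : ‖(1/2:ℂ) * Complex.exp ((p.1:ℂ) * Complex.I)‖ = 1/2 := by
        exact Znorm p.1
      rw [h4, Complex.norm_exp_ofReal_mul_I, mul_one] at h3
      norm_num at h3
  · fun_prop

lemma kernel_bdd (θ t : ℝ) :
    ‖pmKernel ((1/2:ℂ) * Complex.exp ((θ:ℂ) * Complex.I)) t
      * Complex.exp ((-2:ℂ) * Complex.I * θ)‖ ≤ 3 := by
  set z := (1/2:ℂ) * Complex.exp ((θ:ℂ) * Complex.I)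
  set w := z * Complex.exp ((t:ℝ) * Complex.I) with hw
  have hwn : ‖w‖ = 1/2 := by
    rw [hw, norm_mul, Complex.norm_exp_ofReal_mul_I, mul_one,
      Znorm]
  have he : ‖Complex.exp ((-2:ℂ) * Complex.I * θ)‖ = 1 := by
    rw [Complex.norm_exp]
    simp [Complex.mul_re]
  rw [norm_mul, he, mul_one]
  unfold pmKernel
  rw [norm_div, ← hw]
  have h1 : ‖(1:ℂ) - w‖ ≤ 3/2 := by
    calc ‖(1:ℂ) - w‖ ≤ ‖(1:ℂ)‖ + ‖w‖ := norm_sub_le _ _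
    _ ≤ 3/2 := by rw [hwn]; norm_num
  have h2 : (1/2:ℝ) ≤ ‖(1:ℂ) + w‖ := by
    have := abs_norm_sub_norm_le (1:ℂ) (-w)
    simp only [sub_neg_eq_add, norm_neg] at this
    have h5 : ‖(1:ℂ)‖ - ‖w‖ ≤ ‖(1:ℂ) + w‖ := le_trans (le_abs_self _) this
    rw [hwn, norm_one] at h5
    linarith
  calc ‖(1:ℂ) - w‖ / ‖(1:ℂ) + w‖ ≤ (3/2) / (1/2) :=
        div_le_div₀ (by norm_num) h1 (by norm_num) h2
  _ = 3 := by norm_num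

lemma pmSwap (μ : Measure ℝ) [IsFiniteMeasure μ] :
    (Integrable (fun θ : ℝ =>
        (∫ t in Icc (0:ℝ) (2*Real.pi),
          pmKernel ((1/2:ℂ) * Complex.exp ((θ:ℂ) * Complex.I)) t ∂μ)
          * Complex.exp ((-2:ℂ) * Complex.I * θ))
        (volume.restrict (Icc (0:ℝ) (2*Real.pi)))) ∧
    (∫ θ in Icc (0:ℝ) (2*Real.pi),
        (∫ t in Icc (0:ℝ) (2*Real.pi),
          pmKernel ((1/2:ℂ) * Complex.exp ((θ:ℂ) * Complex.I)) t ∂μ)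
          * Complex.exp ((-2:ℂ) * Complex.I * θ))
      = ∫ t in Icc (0:ℝ) (2*Real.pi), ((Real.pi:ℂ)/2 * kc t 2) ∂μ := by
  have hvol : IsFiniteMeasure (volume.restrict (Icc (0:ℝ) (2*Real.pi))) := by
    constructor
    rw [Measure.restrict_apply_univ, Real.volume_Icc]
    exact ENNReal.ofReal_lt_top
  set F : ℝ → ℝ → ℂ := fun θ t =>
    pmKernel ((1/2:ℂ) * Complex.exp ((θ:ℂ) * Complex.I)) t
      * Complex.exp ((-2:ℂ) * Complex.I * θ) with hF
  have hFint : Integrable (Function.uncurry F)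
      ((volume.restrict (Icc (0:ℝ) (2*Real.pi))).prod (μ.restrict (Icc (0:ℝ) (2*Real.pi)))) := by
    apply (Integrable.mono' (g := fun _ => (3:ℝ)))
    · exact integrable_const _
    · exact (kernel_cont.aestronglyMeasurable)
    · exact Filter.Eventually.of_forall fun p => kernel_bdd p.1 p.2
  have key : ∀ θ : ℝ, (∫ t in Icc (0:ℝ) (2*Real.pi),
        pmKernel ((1/2:ℂ) * Complex.exp ((θ:ℂ) * Complex.I)) t ∂μ)
        * Complex.exp ((-2:ℂ) * Complex.I * θ)
      = ∫ t in Icc (0:ℝ) (2*Real.pi), F θ t ∂μ := by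
    intro θ
    rw [hF]
    exact (integral_mul_const _ _).symm
  constructor
  · simp_rw [key]
    exact hFint.integral_prod_left
  · simp_rw [key]
    rw [MeasureTheory.integral_integral_swap hFint]
    congr 1
    funext t
    exact pmInner t

/-- Theorem 2.1, bound for `|a₃|`. -/
theorem BR_a3_bound (m β : ℝ) (hm : 2 ≤ m) (hβ0 : 0 ≤ β) (hβ1 : β < 1)
    (k kinv f g : ℂ → ℂ) (hk : BiUnivalentPair k kinv)
    (hk2 : mc k 2 ≠ 0) (hk3 : mc k 3 ≠ 0)
    (hf : MemBR m β k f g) :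
    ‖mc f 3‖ ≤ m * (1 - β) / ‖mc k 3‖ := by
  obtain ⟨hbi, hsum, -, hΦ, -⟩ := hf
  obtain ⟨q, ⟨hq_an, hq0, μp, μn, hμpf, hμnf, hdiff, hle, hrep⟩, hEq⟩ := hΦ
  set Z : ℝ → ℂ := fun θ => (1/2:ℂ) * Complex.exp ((θ:ℂ) * Complex.I) with hZ
  have hZmem : ∀ θ : ℝ, Z θ ∈ unitDisk := by
    intro θ
    simp only [unitDisk, Metric.mem_ball, dist_zero_right]
    rw [hZ, Znorm]; norm_num
  -- summability of coefficients at radius 1/2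
  have h34 : ((3/4:ℝ):ℂ) ∈ unitDisk := by
    simp only [unitDisk, Metric.mem_ball, dist_zero_right, Complex.norm_real]
    rw [Real.norm_eq_abs, abs_of_pos (by norm_num : (0:ℝ) < 3/4)]; norm_num
  have hs := hsum _ h34
  have ht : Filter.Tendsto (fun n => ‖brCoeff f k n * ((3/4:ℝ):ℂ)^n‖) Filter.atTop (nhds 0) := by
    simpa using hs.tendsto_atTop_zero.norm
  obtain ⟨C, hC⟩ := ht.bddAbove_range
  have hCb : ∀ n : ℕ, ‖brCoeff f k n‖ * (3/4:ℝ)^n ≤ C := by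
    intro n
    have := hC (Set.mem_range_self n)
    rwa [norm_mul, norm_pow, Complex.norm_real, Real.norm_eq_abs,
      show |(3/4:ℝ)| = 3/4 by norm_num] at this
  have hcs : Summable fun n => ‖brCoeff f k n‖ * (1/2:ℝ)^n := by
    have hgeo : Summable (fun n : ℕ => C * (2/3:ℝ)^n) :=
      (summable_geometric_of_lt_one (by norm_num) (by norm_num)).mul_left C
    refine Summable.of_nonneg_of_le (fun n => by positivity) (fun n => ?_) hgeo
    have he : (1/2:ℝ)^n = (3/4:ℝ)^n * (2/3:ℝ)^n := by rw [← mul_pow]; norm_num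
    calc ‖brCoeff f k n‖ * (1/2:ℝ)^n = (‖brCoeff f k n‖ * (3/4:ℝ)^n) * (2/3:ℝ)^n := by
          rw [he]; ring
      _ ≤ C * (2/3:ℝ)^n := mul_le_mul_of_nonneg_right (hCb n) (by positivity)
  -- the coefficient integral
  have hA : ∫ θ in Icc (0:ℝ) (2*Real.pi),
      brFun f k (Z θ) * Complex.exp ((-2:ℂ) * Complex.I * θ)
      = (Real.pi:ℂ)/2 * brCoeff f k 2 := by
    have h : ∀ θ : ℝ, brFun f k (Z θ) = ∑' n : ℕ, brCoeff f k n * (Z θ)^n := fun θ => rfl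
    simp_rw [h, hZ]
    exact keyInt _ hcs
  -- rewrite via the representation
  set P : ℝ → ℂ := fun θ => ∫ t in Icc (0:ℝ) (2*Real.pi), pmKernel (Z θ) t ∂μp with hP
  set N : ℝ → ℂ := fun θ => ∫ t in Icc (0:ℝ) (2*Real.pi), pmKernel (Z θ) t ∂μn with hN
  set E : ℝ → ℂ := fun θ => Complex.exp ((-2:ℂ) * Complex.I * θ) with hE
  have hpt : ∀ θ : ℝ, brFun f k (Z θ) * E θ
      = (β:ℂ) * E θ + ((1 - (β:ℂ)) * (P θ * E θ) - (1 - (β:ℂ)) * (N θ * E θ)) := by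
    intro θ
    rw [hEq _ (hZmem θ), hrep _ (hZmem θ)]
    ring
  have hI1 : Integrable (fun θ : ℝ => (β:ℂ) * E θ)
      (volume.restrict (Icc (0:ℝ) (2*Real.pi))) := by
    apply Continuous.integrableOn_Icc
    fun_prop
  have hI2 : Integrable (fun θ : ℝ => (1 - (β:ℂ)) * (P θ * E θ))
      (volume.restrict (Icc (0:ℝ) (2*Real.pi))) := ((pmSwap μp).1).const_mul _
  have hI3 : Integrable (fun θ : ℝ => (1 - (β:ℂ)) * (N θ * E θ))
      (volume.restrict (Icc (0:ℝ) (2*Real.pi))) := ((pmSwap μn).1).const_mul _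
  have hEint : ∫ θ in Icc (0:ℝ) (2*Real.pi), E θ = 0 := by
    have := expIntL1 (-2)
    rw [if_neg (by norm_num)] at this
    rw [hE]
    convert this using 3
    push_cast; ring
  have hB : ∫ θ in Icc (0:ℝ) (2*Real.pi), brFun f k (Z θ) * E θ
      = (1 - (β:ℂ)) * ((∫ t in Icc (0:ℝ) (2*Real.pi), ((Real.pi:ℂ)/2 * kc t 2) ∂μp)
        - (∫ t in Icc (0:ℝ) (2*Real.pi), ((Real.pi:ℂ)/2 * kc t 2) ∂μn)) := by
    have hI23 : Integrable (fun θ : ℝ => (1 - (β:ℂ)) * (P θ * E θ) - (1 - (β:ℂ)) * (N θ * E θ))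
        (volume.restrict (Icc (0:ℝ) (2*Real.pi))) := hI2.sub hI3
    rw [MeasureTheory.integral_congr_ae (Filter.Eventually.of_forall hpt),
      MeasureTheory.integral_add hI1 hI23, MeasureTheory.integral_sub hI2 hI3,
      MeasureTheory.integral_const_mul, MeasureTheory.integral_const_mul,
      MeasureTheory.integral_const_mul, hEint, mul_zero, zero_add]
    rw [show (∫ θ in Icc (0:ℝ) (2*Real.pi), P θ * E θ)
        = ∫ t in Icc (0:ℝ) (2*Real.pi), ((Real.pi:ℂ)/2 * kc t 2) ∂μp from (pmSwap μp).2,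
      show (∫ θ in Icc (0:ℝ) (2*Real.pi), N θ * E θ)
        = ∫ t in Icc (0:ℝ) (2*Real.pi), ((Real.pi:ℂ)/2 * kc t 2) ∂μn from (pmSwap μn).2]
    ring
  -- norm bounds
  have hJp : ‖∫ t in Icc (0:ℝ) (2*Real.pi), ((Real.pi:ℂ)/2 * kc t 2) ∂μp‖
      ≤ Real.pi * (μp (Icc (0:ℝ) (2*Real.pi))).toReal :=
    norm_setIntegral_le_of_norm_le_const_ae (measure_lt_top _ _)
      (Filter.Eventually.of_forall fun t => le_of_eq (pmInner_norm t))
  have hJn : ‖∫ t in Icc (0:ℝ) (2*Real.pi), ((Real.pi:ℂ)/2 * kc t 2) ∂μn‖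
      ≤ Real.pi * (μn (Icc (0:ℝ) (2*Real.pi))).toReal :=
    norm_setIntegral_le_of_norm_le_const_ae (measure_lt_top _ _)
      (Filter.Eventually.of_forall fun t => le_of_eq (pmInner_norm t))
  have hmain : Real.pi/2 * ‖brCoeff f k 2‖ ≤ (1 - β) * (Real.pi * (m/2)) := by
    have h0 : ‖(Real.pi:ℂ)/2 * brCoeff f k 2‖ = Real.pi/2 * ‖brCoeff f k 2‖ := by
      rw [norm_mul, norm_div]
      simp [Complex.norm_real, Real.norm_eq_abs, abs_of_pos Real.pi_pos]
    have h1 : ‖(1 - (β:ℂ))‖ = 1 - β := by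
      rw [show (1 - (β:ℂ)) = (((1 - β : ℝ)):ℂ) by push_cast; ring, Complex.norm_real,
        Real.norm_eq_abs, abs_of_pos (by linarith)]
    calc Real.pi/2 * ‖brCoeff f k 2‖ = ‖(Real.pi:ℂ)/2 * brCoeff f k 2‖ := h0.symm
      _ = ‖(1 - (β:ℂ)) * ((∫ t in Icc (0:ℝ) (2*Real.pi), ((Real.pi:ℂ)/2 * kc t 2) ∂μp)
            - (∫ t in Icc (0:ℝ) (2*Real.pi), ((Real.pi:ℂ)/2 * kc t 2) ∂μn))‖ := by
          rw [← hA, hB]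
      _ ≤ (1 - β) * (Real.pi * (μp (Icc (0:ℝ) (2*Real.pi))).toReal
            + Real.pi * (μn (Icc (0:ℝ) (2*Real.pi))).toReal) := by
          rw [norm_mul, h1]
          exact mul_le_mul_of_nonneg_left
            (le_trans (norm_sub_le _ _) (add_le_add hJp hJn)) (by linarith)
      _ ≤ (1 - β) * (Real.pi * (m/2)) := by
          apply mul_le_mul_of_nonneg_left _ (by linarith)
          rw [← mul_add]
          exact mul_le_mul_of_nonneg_left hle Real.pi_pos.le
  have hcoeff : ‖brCoeff f k 2‖ ≤ m * (1 - β) := by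
    nlinarith [Real.pi_pos, norm_nonneg (brCoeff f k 2)]
  have hbr : brCoeff f k 2 = mc f 3 * mc k 3 := by
    simp [brCoeff]
  rw [hbr, norm_mul] at hcoeff
  have hpos : 0 < ‖mc k 3‖ := norm_pos_iff.mpr hk3
  rw [le_div_iff₀ hpos]
  calc ‖mc f 3‖ * ‖mc k 3‖ = ‖mc f 3‖ * ‖mc k 3‖ := by
        rfl
    _ ≤ m * (1 - β) := hcoeff
end
end

section
/- Let m ≥ 2, let k(z) = z + ∑_{n≥2} k_n z^n be bi-univalent with k₂ ≠ 0 and k₃ ≠ 0, and let f(z) = z + ∑_{n≥2} a_n z^n belong to the class BR^k(m; 0). Then |a₂| ≤ min{ √(m/|k₃|) , m/|k₂| }, |a₃| ≤ m/|k₃|, and |2a₂² − a₃| ≤ m/|k₃|. -/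
open MeasureTheory Set Metric Complex

noncomputable section

/-! ### Auxiliary lemmas: power series uniqueness -/

lemma ofScalarsSum_eq' (a : ℕ → ℂ) :
    (FormalMultilinearSeries.ofScalars ℂ a).sum = fun z => ∑' n, a n * z ^ n := by
  funext z
  unfold FormalMultilinearSeries.sum
  exact tsum_congr fun n => by
    rw [FormalMultilinearSeries.ofScalars_apply_eq, smul_eq_mul]

lemma hasFPowerSeriesAt_tsum {a : ℕ → ℂ}
    (ha : ∀ z ∈ unitDisk, Summable fun n => a n * z ^ n) :
    HasFPowerSeriesAt (fun z => ∑' n, a n * z ^ n)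
      (FormalMultilinearSeries.ofScalars ℂ a) 0 := by
  have hrad : (0 : ENNReal) < (FormalMultilinearSeries.ofScalars ℂ a).radius := by
    have hs : Summable fun n => a n * ((1:ℂ)/2) ^ n := by
      apply ha
      simp [unitDisk, mem_ball_zero_iff]
      norm_num
    have ht : Filter.Tendsto (fun n : ℕ =>
        ‖FormalMultilinearSeries.ofScalars ℂ a n‖ * ((1:NNReal)/2 : NNReal) ^ n)
        Filter.atTop (nhds 0) := by
      have := hs.tendsto_atTop_zero.norm
      simp only [norm_mul, norm_pow] at this
      convert this using 2 with n
      · rw [FormalMultilinearSeries.ofScalars_norm]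
        norm_num
      · simp
    have := (FormalMultilinearSeries.ofScalars ℂ a).le_radius_of_tendsto ht
    calc (0:ENNReal) < ((1:NNReal)/2 : NNReal) := by norm_num
    _ ≤ _ := this
  have h := ((FormalMultilinearSeries.ofScalars ℂ a).hasFPowerSeriesOnBall
    hrad).hasFPowerSeriesAt
  rwa [ofScalarsSum_eq'] at h

lemma coeff_unique {a b : ℕ → ℂ}
    (ha : ∀ z ∈ unitDisk, Summable fun n => a n * z ^ n)
    (hb : ∀ z ∈ unitDisk, Summable fun n => b n * z ^ n)
    (hab : ∀ z ∈ unitDisk, (∑' n, a n * z ^ n) = ∑' n, b n * z ^ n) : a = b := by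
  have h1 := hasFPowerSeriesAt_tsum ha
  have h2 := hasFPowerSeriesAt_tsum hb
  have heq : (fun z => ∑' n, a n * z ^ n) =ᶠ[nhds (0:ℂ)] (fun z => ∑' n, b n * z ^ n) := by
    filter_upwards [Metric.ball_mem_nhds (0:ℂ) one_pos] with z hz using hab z hz
  have := h1.eq_formalMultilinearSeries_of_eventually h2 heq
  exact (FormalMultilinearSeries.ofScalars_series_eq_iff ℂ a b).mp this

/-! ### Auxiliary lemmas: power series of the `P_m` kernel integral -/

/-- Coefficients of the power series of `z ↦ ∫ pmKernel z t ∂μ`. -/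
def pmc (μ : Measure ℝ) (n : ℕ) : ℂ :=
  if n = 0 then ((μ (Set.Icc 0 (2 * Real.pi))).toReal : ℂ)
  else 2 * (-1) ^ n * ∫ t in Set.Icc 0 (2 * Real.pi), Complex.exp (t * Complex.I) ^ n ∂μ

lemma norm_exp_mul_I_pow (t : ℝ) (n : ℕ) : ‖Complex.exp (t * Complex.I) ^ n‖ = 1 := by
  rw [norm_pow, Complex.norm_exp_ofReal_mul_I, one_pow]

lemma pmc_norm_le (μ : Measure ℝ) [IsFiniteMeasure μ] {n : ℕ} (hn : n ≠ 0) :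
    ‖pmc μ n‖ ≤ 2 * (μ (Set.Icc 0 (2 * Real.pi))).toReal := by
  rw [pmc, if_neg hn, norm_mul, norm_mul]
  have h1 : ‖(2:ℂ)‖ = 2 := by norm_num
  have h2 : ‖(-1:ℂ) ^ n‖ = 1 := by simp
  rw [h1, h2, mul_one]
  have h3 : ‖∫ t in Set.Icc 0 (2 * Real.pi), Complex.exp (t * Complex.I) ^ n ∂μ‖
      ≤ 1 * ((μ.restrict (Set.Icc 0 (2 * Real.pi))) Set.univ).toReal := by
    apply norm_integral_le_of_norm_le_const
    filter_upwards with t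
    rw [norm_exp_mul_I_pow]
  rw [one_mul, Measure.restrict_apply_univ] at h3
  linarith

lemma pmc_norm_le' (μ : Measure ℝ) [IsFiniteMeasure μ] (n : ℕ) :
    ‖pmc μ n‖ ≤ 2 * (μ (Set.Icc 0 (2 * Real.pi))).toReal + 1 := by
  rcases eq_or_ne n 0 with h | h
  · subst h
    rw [pmc, if_pos rfl]
    rw [Complex.norm_real, Real.norm_of_nonneg ENNReal.toReal_nonneg]
    have := ENNReal.toReal_nonneg (a := μ (Set.Icc 0 (2 * Real.pi)))
    linarith
  · have := pmc_norm_le μ h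
    linarith

lemma pmc_summable (μ : Measure ℝ) [IsFiniteMeasure μ] {z : ℂ} (hz : z ∈ unitDisk) :
    Summable fun n => pmc μ n * z ^ n := by
  have hz1 : ‖z‖ < 1 := mem_ball_zero_iff.mp hz
  apply Summable.of_norm_bounded
    (g := fun n => (2 * (μ (Set.Icc 0 (2 * Real.pi))).toReal + 1) * ‖z‖ ^ n)
  · exact (summable_geometric_of_lt_one (norm_nonneg z) hz1).mul_left _
  · intro n
    rw [norm_mul, norm_pow]
    exact mul_le_mul_of_nonneg_right (pmc_norm_le' μ n) (by positivity)

lemma kernel_hasSum {w : ℂ} (hw : ‖w‖ < 1) :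
    HasSum (fun n : ℕ => (if n = 0 then 1 else 2 * (-1) ^ n) * w ^ n)
      ((1 - w) / (1 + w)) := by
  have hne : (1 : ℂ) + w ≠ 0 := by
    intro h
    have : w = -1 := by linear_combination h
    rw [this] at hw; simp at hw
  have h1 : ‖-w‖ < 1 := by simpa
  have hgeo : HasSum (fun n : ℕ => (-w) ^ n) (1 - -w)⁻¹ :=
    hasSum_geometric_of_norm_lt_one h1
  have hgeo2 : HasSum (fun n : ℕ => 2 * (-w) ^ n) (2 * (1 + w)⁻¹) := by
    have := hgeo.mul_left 2
    rwa [sub_neg_eq_add] at this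
  have hsingle : HasSum (fun n : ℕ => if n = 0 then (1:ℂ) else 0) 1 := by
    exact hasSum_ite_eq 0 1
  have hs := hgeo2.sub hsingle
  have hfun : (fun n : ℕ => (if n = 0 then (1:ℂ) else 2 * (-1) ^ n) * w ^ n)
      = fun n => 2 * (-w) ^ n - if n = 0 then (1:ℂ) else 0 := by
    funext n
    by_cases h : n = 0
    · subst h; norm_num
    · rw [if_neg h, if_neg h, neg_pow, sub_zero]
      ring
  rw [hfun]
  convert hs using 1
  · rfl
  linear_combination (-1:ℂ) * mul_inv_cancel₀ hne

lemma continuous_F (z : ℂ) (n : ℕ) :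
    Continuous (fun t : ℝ => (if n = 0 then (1:ℂ)
      else 2 * (-1) ^ n * Complex.exp (t * Complex.I) ^ n) * z ^ n) := by
  rcases eq_or_ne n 0 with h | h
  · simp [h]; exact continuous_const
  · simp only [if_neg h]
    exact ((continuous_const.mul ((Complex.continuous_exp.comp
      (Complex.continuous_ofReal.mul continuous_const)).pow n)).mul continuous_const)

lemma norm_F_le (z : ℂ) (n : ℕ) (t : ℝ) :
    ‖(if n = 0 then (1:ℂ) else 2 * (-1) ^ n * Complex.exp (t * Complex.I) ^ n) * z ^ n‖
      ≤ 2 * ‖z‖ ^ n := by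
  rw [norm_mul, norm_pow]
  apply mul_le_mul_of_nonneg_right _ (by positivity)
  rcases eq_or_ne n 0 with h | h
  · rw [if_pos h]; norm_num
  · rw [if_neg h, norm_mul, norm_mul, norm_exp_mul_I_pow]
    simp

lemma integral_kernel (μ : Measure ℝ) [IsFiniteMeasure μ] {z : ℂ} (hz : z ∈ unitDisk) :
    (∫ t in Set.Icc 0 (2 * Real.pi), pmKernel z t ∂μ) = ∑' n, pmc μ n * z ^ n := by
  have hz1 : ‖z‖ < 1 := mem_ball_zero_iff.mp hz
  set T := Set.Icc (0:ℝ) (2 * Real.pi) with hT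
  set ν := μ.restrict T with hν
  set F : ℕ → ℝ → ℂ := fun n t =>
    (if n = 0 then (1:ℂ) else 2 * (-1) ^ n * Complex.exp (t * Complex.I) ^ n) * z ^ n with hF
  have hpt : ∀ t : ℝ, pmKernel z t = ∑' n, F n t := by
    intro t
    have hw : ‖z * Complex.exp (t * Complex.I)‖ < 1 := by
      rw [norm_mul]
      have : ‖Complex.exp ((t:ℂ) * Complex.I)‖ = 1 := by
        simpa using norm_exp_mul_I_pow t 1
      rw [this, mul_one]; exact hz1
    have hhs := kernel_hasSum hw
    have heq : (fun n : ℕ => (if n = 0 then (1:ℂ) else 2 * (-1) ^ n)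
        * (z * Complex.exp (t * Complex.I)) ^ n) = fun n => F n t := by
      funext n
      rcases eq_or_ne n 0 with h | h
      · simp [hF, h]
      · rw [hF]; simp only [if_neg h]
        rw [mul_pow]; ring
    rw [heq] at hhs
    exact (hhs.tsum_eq).symm ▸ rfl
  have hInt : ∀ n, Integrable (F n) ν := by
    intro n
    exact (continuous_F z n).integrableOn_Icc
  have hSum : Summable fun n => ∫ t, ‖F n t‖ ∂ν := by
    apply Summable.of_nonneg_of_le
      (f := fun n => 2 * ‖z‖ ^ n * (ν Set.univ).toReal)
    · intro n; positivity
    · intro n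
      calc (∫ t, ‖F n t‖ ∂ν) ≤ ∫ _t, 2 * ‖z‖ ^ n ∂ν := by
            apply integral_mono (hInt n).norm (integrable_const _)
            intro t; exact norm_F_le z n t
        _ = 2 * ‖z‖ ^ n * (ν Set.univ).toReal := by
            rw [integral_const, smul_eq_mul, mul_comm, measureReal_def]
    · apply Summable.mul_right
      exact (summable_geometric_of_lt_one (norm_nonneg z) hz1).mul_left 2
  have hswap := integral_tsum_of_summable_integral_norm hInt hSum
  have hterm : ∀ n, (∫ t, F n t ∂ν) = pmc μ n * z ^ n := by
    intro n
    rcases eq_or_ne n 0 with h | h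
    · subst h
      simp only [hF, if_pos rfl, pow_zero, mul_one]
      rw [integral_const, pmc, if_pos rfl, hν, measureReal_def, Measure.restrict_apply_univ]
      simp [hT]
    · have heq : (fun t : ℝ => F n t) = fun t : ℝ =>
          (2 * (-1) ^ n) * (Complex.exp ((t:ℂ) * Complex.I) ^ n) * z ^ n := by
        funext t; rw [hF]; simp only [if_neg h]
      rw [heq, integral_mul_const, MeasureTheory.integral_const_mul, pmc, if_neg h]
  calc (∫ t in T, pmKernel z t ∂μ) = ∫ t, (∑' n, F n t) ∂ν := by
        rw [hν]; exact integral_congr_ae (Filter.Eventually.of_forall fun t => hpt t)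
    _ = ∑' n, ∫ t, F n t ∂ν := hswap.symm
    _ = ∑' n, pmc μ n * z ^ n := tsum_congr hterm

/-! ### Coefficient bounds for `P_m(0)` functions -/

lemma memPmBeta_coeff_bound {m : ℝ} {a : ℕ → ℂ}
    (hsum : ∀ z ∈ unitDisk, Summable fun n => a n * z ^ n)
    (hP : MemPmBeta m 0 (fun z => ∑' n, a n * z ^ n)) :
    ∀ n : ℕ, n ≠ 0 → ‖a n‖ ≤ m := by
  obtain ⟨q, ⟨hqA, hq0, μp, μn, hμpF, hμnF, hone, hvar, hrep⟩, hbeta⟩ := hP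
  haveI := hμpF; haveI := hμnF
  have key : a = fun n => pmc μp n - pmc μn n := by
    apply coeff_unique hsum
    · intro z hz
      exact ((pmc_summable μp hz).sub (pmc_summable μn hz)).congr (by
        intro n; simp [sub_mul])
    · intro z hz
      have h1 := hbeta z hz
      simp only [Complex.ofReal_zero, zero_add, sub_zero, one_mul] at h1
      rw [h1, hrep z hz, integral_kernel μp hz, integral_kernel μn hz]
      rw [← Summable.tsum_sub (pmc_summable μp hz) (pmc_summable μn hz)]
      exact tsum_congr fun n => by ring
  intro n hn
  have han : a n = pmc μp n - pmc μn n := congrFun key n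
  rw [han]
  calc ‖pmc μp n - pmc μn n‖ ≤ ‖pmc μp n‖ + ‖pmc μn n‖ := norm_sub_le _ _
    _ ≤ 2 * (μp (Set.Icc 0 (2*Real.pi))).toReal
        + 2 * (μn (Set.Icc 0 (2*Real.pi))).toReal :=
        add_le_add (pmc_norm_le μp hn) (pmc_norm_le μn hn)
    _ ≤ m := by linarith

/-! ### MacLaurin coefficients of the inverse function -/

lemma inverse_derivs {f g : ℂ → ℂ} (h : BiUnivalentPair f g) :
    deriv g 0 = 1 ∧
    deriv (deriv g) 0 = - deriv (deriv f) 0 ∧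
    deriv (deriv (deriv g)) 0 =
      - deriv (deriv (deriv f)) 0 + 3 * (deriv (deriv f) 0) ^ 2 := by
  obtain ⟨hfA, hf0, hf'0, -, hgA, -, hg0, hfg⟩ := h
  have h0 : (0:ℂ) ∈ unitDisk := by simp [unitDisk]
  have hgc : ContinuousAt g 0 := (hgA 0 h0).continuousAt
  have hU1 : {z : ℂ | g z ∈ unitDisk} ∈ nhds (0:ℂ) := by
    apply hgc.preimage_mem_nhds
    rw [hg0]
    exact Metric.isOpen_ball.mem_nhds h0
  obtain ⟨ε, hε, hball⟩ := Metric.mem_nhds_iff.mp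
    (Filter.inter_mem hU1 (Metric.ball_mem_nhds (0:ℂ) (by norm_num : (0:ℝ) < 1/4)))
  set U := Metric.ball (0:ℂ) ε with hUdef
  have hU0 : (0:ℂ) ∈ U := Metric.mem_ball_self hε
  have hUopen : IsOpen U := Metric.isOpen_ball
  have hU14 : U ⊆ Metric.ball (0:ℂ) (1/4) := fun z hz => (hball hz).2
  have hUdisk : U ⊆ unitDisk := fun z hz => by
    have := mem_ball_zero_iff.mp (hU14 hz)
    exact mem_ball_zero_iff.mpr (lt_trans this (by norm_num))
  have hgU : ∀ z ∈ U, g z ∈ unitDisk := fun z hz => (hball hz).1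
  have hidU : ∀ z ∈ U, f (g z) = z := fun z hz =>
    hfg z (mem_ball_zero_iff.mp (hU14 hz))
  set F1 := deriv f with hF1
  set F2 := deriv F1 with hF2
  set F3 := deriv F2 with hF3
  set G1 := deriv g with hG1
  set G2 := deriv G1 with hG2
  set G3 := deriv G2 with hG3
  have hF1A : AnalyticOnNhd ℂ F1 unitDisk := hfA.deriv
  have hF2A : AnalyticOnNhd ℂ F2 unitDisk := hF1A.deriv
  have hG1A : AnalyticOnNhd ℂ G1 unitDisk := hgA.deriv
  have hG2A : AnalyticOnNhd ℂ G2 unitDisk := hG1A.deriv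
  -- first derivative identity
  have h1 : ∀ z ∈ U, F1 (g z) * G1 z = 1 := by
    intro z hz
    have hev : (f ∘ g) =ᶠ[nhds z] id := by
      filter_upwards [hUopen.mem_nhds hz] with y hy using hidU y hy
    have hd := deriv_comp z ((hfA _ (hgU z hz)).differentiableAt)
      ((hgA z (hUdisk hz)).differentiableAt)
    rw [hev.deriv_eq, deriv_id] at hd
    exact hd.symm
  -- second derivative identity
  have h2 : ∀ z ∈ U, F2 (g z) * G1 z * G1 z + F1 (g z) * G2 z = 0 := by
    intro z hz
    have hder1 : HasDerivAt (fun y => F1 (g y)) (F2 (g z) * G1 z) z :=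
      HasDerivAt.comp z ((hF1A _ (hgU z hz)).differentiableAt.hasDerivAt)
        ((hgA z (hUdisk hz)).differentiableAt.hasDerivAt)
    have hder2 : HasDerivAt G1 (G2 z) z :=
      (hG1A z (hUdisk hz)).differentiableAt.hasDerivAt
    have hφ : HasDerivAt (fun y => F1 (g y) * G1 y)
        (F2 (g z) * G1 z * G1 z + F1 (g z) * G2 z) z := hder1.mul hder2
    have hev : (fun y => F1 (g y) * G1 y) =ᶠ[nhds z] (fun _ => 1) := by
      filter_upwards [hUopen.mem_nhds hz] with y hy using h1 y hy
    have := hφ.deriv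
    rw [hev.deriv_eq, deriv_const] at this
    exact this.symm
  -- third derivative identity at 0
  have hg0disk : g 0 ∈ unitDisk := hgU 0 hU0
  have hgd : HasDerivAt g (G1 0) 0 := (hgA 0 h0).differentiableAt.hasDerivAt
  have hA : HasDerivAt (fun y => F2 (g y)) (F3 (g 0) * G1 0) 0 :=
    HasDerivAt.comp 0 ((hF2A _ hg0disk).differentiableAt.hasDerivAt) hgd
  have hB : HasDerivAt G1 (G2 0) 0 := (hG1A 0 h0).differentiableAt.hasDerivAt
  have hC : HasDerivAt G2 (G3 0) 0 := (hG2A 0 h0).differentiableAt.hasDerivAt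
  have hD : HasDerivAt (fun y => F1 (g y)) (F2 (g 0) * G1 0) 0 :=
    HasDerivAt.comp 0 ((hF1A _ hg0disk).differentiableAt.hasDerivAt) hgd
  have hψ : HasDerivAt (fun y => F2 (g y) * G1 y * G1 y + F1 (g y) * G2 y)
      (((F3 (g 0) * G1 0) * G1 0 + F2 (g 0) * G2 0) * G1 0
        + (F2 (g 0) * G1 0) * G2 0
        + ((F2 (g 0) * G1 0) * G2 0 + F1 (g 0) * G3 0)) 0 :=
    ((hA.mul hB).mul hB).add (hD.mul hC)
  have hev3 : (fun y => F2 (g y) * G1 y * G1 y + F1 (g y) * G2 y)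
      =ᶠ[nhds (0:ℂ)] (fun _ => 0) := by
    filter_upwards [hUopen.mem_nhds hU0] with y hy using h2 y hy
  have h3 : ((F3 (g 0) * G1 0) * G1 0 + F2 (g 0) * G2 0) * G1 0
        + (F2 (g 0) * G1 0) * G2 0
        + ((F2 (g 0) * G1 0) * G2 0 + F1 (g 0) * G3 0) = 0 := by
    have := hψ.deriv
    rw [hev3.deriv_eq, deriv_const] at this
    exact this.symm
  -- now solve
  have e1 := h1 0 hU0
  have e2 := h2 0 hU0
  rw [hg0] at e1 e2 h3
  rw [hf'0, one_mul] at e1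
  refine ⟨e1, ?_, ?_⟩
  · have := e2
    rw [e1, hf'0] at this
    linear_combination this
  · rw [e1, hf'0] at h3 e2
    have hG2v : G2 0 = - F2 0 := by linear_combination e2
    rw [hG2v] at h3
    linear_combination h3

lemma inverse_mc {f g : ℂ → ℂ} (h : BiUnivalentPair f g) :
    mc g 2 = - mc f 2 ∧ mc g 3 = 2 * mc f 2 ^ 2 - mc f 3 := by
  obtain ⟨h1, h2, h3⟩ := inverse_derivs h
  have i2 : ∀ u : ℂ → ℂ, iteratedDeriv 2 u = deriv (deriv u) := by
    intro u
    rw [iteratedDeriv_succ, iteratedDeriv_one]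
  have i3 : ∀ u : ℂ → ℂ, iteratedDeriv 3 u = deriv (deriv (deriv u)) := by
    intro u
    rw [iteratedDeriv_succ, iteratedDeriv_succ, iteratedDeriv_one]
  constructor
  · rw [mc, mc, i2, i2, h2]
    ring
  · rw [mc, mc, mc, i3, i3, i2, h3]
    have e6 : ((3:ℕ).factorial : ℂ) = 6 := by norm_num [Nat.factorial]
    rw [e6]
    have e2 : ((2:ℕ).factorial : ℂ) = 2 := by norm_num [Nat.factorial]
    rw [e2]
    ring

/-- Corollary 2.1: the case `β = 0` of Theorem 2.1. -/
theorem BR_beta_zero_bounds (m : ℝ) (hm : 2 ≤ m)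
    (k kinv f g : ℂ → ℂ) (hk : BiUnivalentPair k kinv)
    (hk2 : mc k 2 ≠ 0) (hk3 : mc k 3 ≠ 0)
    (hf : MemBR m 0 k f g) :
    ‖mc f 2‖ ≤
        min (Real.sqrt (m / ‖mc k 3‖)) (m / ‖mc k 2‖) ∧
      ‖mc f 3‖ ≤ m / ‖mc k 3‖ ∧
      ‖2 * mc f 2 ^ 2 - mc f 3‖ ≤ m / ‖mc k 3‖ := by
  obtain ⟨hbi, hsf, hsg, hPf, hPg⟩ := hf
  have hΦ : ∀ n : ℕ, n ≠ 0 → ‖brCoeff f k n‖ ≤ m := memPmBeta_coeff_bound hsf hPf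
  have hΨ : ∀ n : ℕ, n ≠ 0 → ‖brCoeff g k n‖ ≤ m := memPmBeta_coeff_bound hsg hPg
  obtain ⟨hg2, hg3⟩ := inverse_mc hbi
  have hk2p : 0 < ‖mc k 2‖ := norm_pos_iff.mpr hk2
  have hk3p : 0 < ‖mc k 3‖ := norm_pos_iff.mpr hk3
  have eΦ1 : brCoeff f k 1 = mc f 2 * mc k 2 := by norm_num [brCoeff]
  have eΦ2 : brCoeff f k 2 = mc f 3 * mc k 3 := by norm_num [brCoeff]
  have eΨ2 : brCoeff g k 2 = mc g 3 * mc k 3 := by norm_num [brCoeff]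
  have hb1 : ‖mc f 2‖ * ‖mc k 2‖ ≤ m := by
    have := hΦ 1 one_ne_zero
    rwa [eΦ1, norm_mul] at this
  have hb2 : ‖mc f 3‖ * ‖mc k 3‖ ≤ m := by
    have := hΦ 2 two_ne_zero
    rwa [eΦ2, norm_mul] at this
  have hb3 : ‖2 * mc f 2 ^ 2 - mc f 3‖ * ‖mc k 3‖ ≤ m := by
    have := hΨ 2 two_ne_zero
    rwa [eΨ2, hg3, norm_mul] at this
  have d1 : ‖mc f 2‖ ≤ m / ‖mc k 2‖ := (le_div_iff₀ hk2p).mpr hb1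
  have d2 : ‖mc f 3‖ ≤ m / ‖mc k 3‖ := (le_div_iff₀ hk3p).mpr hb2
  have d3 : ‖2 * mc f 2 ^ 2 - mc f 3‖ ≤ m / ‖mc k 3‖ := (le_div_iff₀ hk3p).mpr hb3
  have dsq : ‖mc f 2‖ ≤ Real.sqrt (m / ‖mc k 3‖) := by
    have hid : (2:ℂ) * mc f 2 ^ 2 = mc f 3 + (2 * mc f 2 ^ 2 - mc f 3) := by ring
    have hnorm : ‖(2:ℂ) * mc f 2 ^ 2‖ = 2 * ‖mc f 2‖ ^ 2 := by
      rw [norm_mul, norm_pow]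
      norm_num
    have hle : 2 * ‖mc f 2‖ ^ 2 ≤ 2 * (m / ‖mc k 3‖) := by
      rw [← hnorm, hid]
      calc ‖mc f 3 + (2 * mc f 2 ^ 2 - mc f 3)‖
          ≤ ‖mc f 3‖ + ‖2 * mc f 2 ^ 2 - mc f 3‖ := norm_add_le _ _
        _ ≤ 2 * (m / ‖mc k 3‖) := by linarith
    have hsq : ‖mc f 2‖ ^ 2 ≤ m / ‖mc k 3‖ := by linarith
    have hmd : 0 ≤ m / ‖mc k 3‖ := div_nonneg (by linarith) hk3p.le
    exact (Real.le_sqrt (norm_nonneg _) hmd).mpr hsq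
  exact ⟨le_min dsq d1, d2, d3⟩
end
end

section
/- Let m ≥ 2 and let f(z) = z + ∑_{n≥2} a_n z^n be bi-univalent with inverse g = f⁻¹. If the derivative f' belongs to the class P_m and g' belongs to the class P_m, then |a₂| ≤ √(m/3), |a₃| ≤ m/3, and |2a₂² − a₃| ≤ m/3. -/
open MeasureTheory Set Metric Complex

noncomputable section

open Filter
open scoped Topology

def pmK1 (z : ℂ) (t : ℝ) : ℂ :=
  -2 * Complex.exp (t * Complex.I) / (1 + z * Complex.exp (t * Complex.I)) ^ 2

def pmK2 (z : ℂ) (t : ℝ) : ℂ :=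
  4 * Complex.exp (t * Complex.I) ^ 2 / (1 + z * Complex.exp (t * Complex.I)) ^ 3

lemma norm_exp_ti (t : ℝ) : ‖Complex.exp (t * Complex.I)‖ = 1 := by
  simpa using Complex.abs_exp_ofReal_mul_I t

lemma denom_lb {z : ℂ} (t : ℝ) (hz : ‖z‖ ≤ 1/2) :
    1/2 ≤ ‖1 + z * Complex.exp (t * Complex.I)‖ := by
  have h1 : ‖z * Complex.exp (t * Complex.I)‖ ≤ 1/2 := by
    rw [norm_mul, norm_exp_ti, mul_one]; exact hz
  calc (1:ℝ)/2 = 1 - 1/2 := by norm_num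
  _ ≤ ‖(1:ℂ)‖ - ‖z * Complex.exp (t * Complex.I)‖ := by
        rw [norm_one]; linarith
  _ ≤ ‖1 + z * Complex.exp (t * Complex.I)‖ := by
        have := norm_add_le (1 + z * Complex.exp (t * Complex.I)) (-(z * Complex.exp (t * Complex.I)))
        simp only [add_neg_cancel_right, norm_neg] at this
        linarith

lemma denom_ne {z : ℂ} (t : ℝ) (hz : ‖z‖ < 1) :
    1 + z * Complex.exp (t * Complex.I) ≠ 0 := by
  intro h
  have h1 : ‖z * Complex.exp (t * Complex.I)‖ < 1 := by
    rw [norm_mul, norm_exp_ti, mul_one]; exact hz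
  have h2 : z * Complex.exp (t * Complex.I) = -1 := by linear_combination h
  rw [h2, norm_neg, norm_one] at h1
  exact absurd h1 (lt_irrefl 1)

lemma hasDerivAt_pmKernel {z : ℂ} (t : ℝ) (hz : ‖z‖ < 1) :
    HasDerivAt (fun z => pmKernel z t) (pmK1 z t) z := by
  set e := Complex.exp (t * Complex.I) with he
  have hd : 1 + z * e ≠ 0 := denom_ne t hz
  have h1 : HasDerivAt (fun z : ℂ => 1 - z * e) (-e) z := by
    simpa using ((hasDerivAt_id z).mul_const e).const_sub 1
  have h2 : HasDerivAt (fun z : ℂ => 1 + z * e) e z := by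
    simpa using ((hasDerivAt_id z).mul_const e).const_add 1
  have := h1.fun_div h2 hd
  refine this.congr_deriv ?_
  rw [pmK1]
  field_simp
  ring

lemma hasDerivAt_pmK1 {z : ℂ} (t : ℝ) (hz : ‖z‖ < 1) :
    HasDerivAt (fun z => pmK1 z t) (pmK2 z t) z := by
  set e := Complex.exp (t * Complex.I) with he
  have hd : 1 + z * e ≠ 0 := denom_ne t hz
  have h2 : HasDerivAt (fun z : ℂ => (1 + z * e) ^ 2) (2 * (1 + z * e) * e) z := by
    have h : HasDerivAt (fun z : ℂ => 1 + z * e) e z := by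
      simpa using ((hasDerivAt_id z).mul_const e).const_add 1
    simpa [mul_comm] using h.fun_pow 2
  have := (hasDerivAt_const z (-2 * e)).fun_div h2 (pow_ne_zero 2 hd)
  refine this.congr_deriv ?_
  rw [pmK2, ← he]
  field_simp
  ring

lemma continuous_expti : Continuous (fun t : ℝ => Complex.exp (t * Complex.I)) :=
  Complex.continuous_exp.comp (Complex.continuous_ofReal.mul continuous_const)

lemma continuous_pmKernel {z : ℂ} (hz : ‖z‖ < 1) : Continuous (fun t => pmKernel z t) := by
  apply Continuous.div
  · exact continuous_const.sub (continuous_const.mul continuous_expti)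
  · exact continuous_const.add (continuous_const.mul continuous_expti)
  · exact fun t => denom_ne t hz

lemma continuous_pmK1 {z : ℂ} (hz : ‖z‖ < 1) : Continuous (fun t => pmK1 z t) := by
  apply Continuous.div
  · exact continuous_const.mul continuous_expti
  · exact (continuous_const.add (continuous_const.mul continuous_expti)).pow 2
  · exact fun t => pow_ne_zero 2 (denom_ne t hz)

lemma norm_pmKernel_le {z : ℂ} (t : ℝ) (hz : ‖z‖ ≤ 1/2) : ‖pmKernel z t‖ ≤ 3 := by
  rw [pmKernel, norm_div]
  have h1 : ‖1 - z * Complex.exp (t * Complex.I)‖ ≤ 3/2 := by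
    calc ‖1 - z * Complex.exp (t * Complex.I)‖ ≤ ‖(1:ℂ)‖ + ‖z * Complex.exp (t * Complex.I)‖ :=
          norm_sub_le _ _
    _ ≤ 3/2 := by rw [norm_one, norm_mul, norm_exp_ti, mul_one]; linarith
  have h2 := denom_lb t hz
  calc ‖1 - z * Complex.exp (t * Complex.I)‖ / ‖1 + z * Complex.exp (t * Complex.I)‖
      ≤ (3/2) / (1/2) := by gcongr <;> norm_num
  _ = 3 := by norm_num

lemma norm_pmK1_le {z : ℂ} (t : ℝ) (hz : ‖z‖ ≤ 1/2) : ‖pmK1 z t‖ ≤ 8 := by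
  rw [pmK1, norm_div, norm_pow]
  have h1 : ‖-2 * Complex.exp (t * Complex.I)‖ = 2 := by
    rw [norm_mul, norm_exp_ti, mul_one]; simp
  have h2 := denom_lb t hz
  rw [h1]
  calc (2:ℝ) / ‖1 + z * Complex.exp (t * Complex.I)‖ ^ 2 ≤ 2 / (1/2)^2 := by
        gcongr <;> norm_num
  _ = 8 := by norm_num

lemma norm_pmK2_le {z : ℂ} (t : ℝ) (hz : ‖z‖ ≤ 1/2) : ‖pmK2 z t‖ ≤ 32 := by
  rw [pmK2, norm_div]
  have h1 : ‖4 * Complex.exp (t * Complex.I) ^ 2‖ = 4 := by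
    rw [norm_mul, norm_pow, norm_exp_ti]; simp
  rw [h1, norm_pow]
  have h2 := denom_lb t hz
  calc (4:ℝ) / ‖1 + z * Complex.exp (t * Complex.I)‖ ^ 3 ≤ 4 / (1/2)^3 := by
        gcongr <;> norm_num
  _ = 32 := by norm_num

lemma integral_pmKernel_hasDerivAt (ν : Measure ℝ) [IsFiniteMeasure ν] {z₀ : ℂ}
    (hz₀ : ‖z₀‖ < 1/2) :
    HasDerivAt (fun z => ∫ t, pmKernel z t ∂ν) (∫ t, pmK1 z₀ t ∂ν) z₀ := by
  have hε : 0 < 1/2 - ‖z₀‖ := by linarith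
  have hball : ∀ x ∈ ball z₀ (1/2 - ‖z₀‖), ‖x‖ < 1/2 := by
    intro x hx
    rw [mem_ball, dist_eq_norm] at hx
    calc ‖x‖ ≤ ‖x - z₀‖ + ‖z₀‖ := by simpa using norm_add_le (x - z₀) z₀
    _ < 1/2 := by linarith
  refine (hasDerivAt_integral_of_dominated_loc_of_deriv_le (bound := fun _ => (8:ℝ)) (ball_mem_nhds z₀ hε) ?_ ?_ ?_ ?_ ?_ ?_).2
  · have : ∀ᶠ x in 𝓝 z₀, x ∈ ball (0:ℂ) (1/2) :=
      Metric.isOpen_ball.eventually_mem (by simpa [mem_ball_zero_iff] using hz₀)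
    filter_upwards [this] with x hx
    exact (continuous_pmKernel (by rw [← mem_ball_zero_iff]; exact ball_subset_ball (by norm_num) hx)).aestronglyMeasurable
  · exact (integrable_const (3:ℝ)).mono'
      (continuous_pmKernel (by linarith)).aestronglyMeasurable
      (Eventually.of_forall fun t => norm_pmKernel_le t hz₀.le)
  · exact (continuous_pmK1 (by linarith)).aestronglyMeasurable
  · exact Eventually.of_forall fun t x hx => norm_pmK1_le t (hball x hx).le
  · exact integrable_const 8
  · exact Eventually.of_forall fun t x hx => hasDerivAt_pmKernel t (by linarith [hball x hx])

lemma integral_pmK1_hasDerivAt (ν : Measure ℝ) [IsFiniteMeasure ν] {z₀ : ℂ}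
    (hz₀ : ‖z₀‖ < 1/2) :
    HasDerivAt (fun z => ∫ t, pmK1 z t ∂ν) (∫ t, pmK2 z₀ t ∂ν) z₀ := by
  have hε : 0 < 1/2 - ‖z₀‖ := by linarith
  have hball : ∀ x ∈ ball z₀ (1/2 - ‖z₀‖), ‖x‖ < 1/2 := by
    intro x hx
    rw [mem_ball, dist_eq_norm] at hx
    calc ‖x‖ ≤ ‖x - z₀‖ + ‖z₀‖ := by simpa using norm_add_le (x - z₀) z₀
    _ < 1/2 := by linarith
  refine (hasDerivAt_integral_of_dominated_loc_of_deriv_le (bound := fun _ => (32:ℝ)) (ball_mem_nhds z₀ hε) ?_ ?_ ?_ ?_ ?_ ?_).2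
  · have : ∀ᶠ x in 𝓝 z₀, x ∈ ball (0:ℂ) (1/2) :=
      Metric.isOpen_ball.eventually_mem (by simpa [mem_ball_zero_iff] using hz₀)
    filter_upwards [this] with x hx
    exact (continuous_pmK1 (by rw [← mem_ball_zero_iff]; exact ball_subset_ball (by norm_num) hx)).aestronglyMeasurable
  · exact (integrable_const (8:ℝ)).mono'
      (continuous_pmK1 (by linarith)).aestronglyMeasurable
      (Eventually.of_forall fun t => norm_pmK1_le t hz₀.le)
  · exact (Continuous.div (continuous_const.mul (continuous_expti.pow 2))
      ((continuous_const.add (continuous_const.mul continuous_expti)).pow 3)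
      (fun t => pow_ne_zero 3 (denom_ne t (by linarith)))).aestronglyMeasurable
  · exact Eventually.of_forall fun t x hx => norm_pmK2_le t (hball x hx).le
  · exact integrable_const 32
  · exact Eventually.of_forall fun t x hx => hasDerivAt_pmK1 t (by linarith [hball x hx])

lemma MemPm.deriv_bound {m : ℝ} {p : ℂ → ℂ} (h : MemPm m p) :
    ‖deriv p 0‖ ≤ m ∧ ‖deriv (deriv p) 0‖ ≤ 2 * m := by
  obtain ⟨hA, hp0, μp, μn, hfp, hfn, hsum1, hsum2, hrep⟩ := h
  set s := Set.Icc (0:ℝ) (2*Real.pi) with hs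
  haveI h1 : IsFiniteMeasure (μp.restrict s) :=
    ⟨by rw [Measure.restrict_apply_univ]; exact measure_lt_top μp s⟩
  haveI h2 : IsFiniteMeasure (μn.restrict s) :=
    ⟨by rw [Measure.restrict_apply_univ]; exact measure_lt_top μn s⟩
  set I : ℂ → ℂ := fun z =>
    (∫ t, pmKernel z t ∂(μp.restrict s)) - (∫ t, pmKernel z t ∂(μn.restrict s)) with hI
  set J : ℂ → ℂ := fun z =>
    (∫ t, pmK1 z t ∂(μp.restrict s)) - (∫ t, pmK1 z t ∂(μn.restrict s)) with hJ
  have hmem : unitDisk ∈ 𝓝 (0:ℂ) :=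
    Metric.isOpen_ball.mem_nhds (by simp [unitDisk])
  have hpI : p =ᶠ[𝓝 0] I := eventually_of_mem hmem hrep
  have hIJ : ∀ z : ℂ, ‖z‖ < 1/2 → HasDerivAt I (J z) z := fun z hz =>
    (integral_pmKernel_hasDerivAt (μp.restrict s) hz).sub
      (integral_pmKernel_hasDerivAt (μn.restrict s) hz)
  have hd1 : deriv p 0 = J 0 := by
    rw [hpI.deriv_eq]; exact (hIJ 0 (by simp)).deriv
  have hb2 : deriv p =ᶠ[𝓝 0] J := by
    refine hpI.deriv.trans ?_
    have hmem2 : ball (0:ℂ) (1/2) ∈ 𝓝 (0:ℂ) :=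
      Metric.isOpen_ball.mem_nhds (by simp)
    exact eventually_of_mem hmem2 fun z hz => (hIJ z (by simpa [mem_ball_zero_iff] using hz)).deriv
  have hd2 : deriv (deriv p) 0 =
      (∫ t, pmK2 0 t ∂(μp.restrict s)) - (∫ t, pmK2 0 t ∂(μn.restrict s)) := by
    rw [hb2.deriv_eq]
    exact (((integral_pmK1_hasDerivAt (μp.restrict s) (by simp : ‖(0:ℂ)‖ < 1/2)).sub
      (integral_pmK1_hasDerivAt (μn.restrict s) (by simp))).deriv)
  -- norm bounds
  have hK1 : ∀ t : ℝ, ‖pmK1 0 t‖ = 2 := by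
    intro t
    rw [pmK1]
    simp [norm_exp_ti]
  have hK2 : ∀ t : ℝ, ‖pmK2 0 t‖ = 4 := by
    intro t
    rw [pmK2]
    simp [norm_div, norm_mul, norm_pow, norm_exp_ti]
  have bp1 : ‖∫ t, pmK1 0 t ∂(μp.restrict s)‖ ≤ 2 * (μp s).toReal := by
    have := norm_integral_le_of_norm_le_const (μ := μp.restrict s)
      (f := fun t => pmK1 0 t) (C := 2) (Eventually.of_forall fun t => (hK1 t).le)
    rwa [measureReal_restrict_apply_univ, measureReal_def] at this
  have bn1 : ‖∫ t, pmK1 0 t ∂(μn.restrict s)‖ ≤ 2 * (μn s).toReal := by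
    have := norm_integral_le_of_norm_le_const (μ := μn.restrict s)
      (f := fun t => pmK1 0 t) (C := 2) (Eventually.of_forall fun t => (hK1 t).le)
    rwa [measureReal_restrict_apply_univ, measureReal_def] at this
  have bp2 : ‖∫ t, pmK2 0 t ∂(μp.restrict s)‖ ≤ 4 * (μp s).toReal := by
    have := norm_integral_le_of_norm_le_const (μ := μp.restrict s)
      (f := fun t => pmK2 0 t) (C := 4) (Eventually.of_forall fun t => (hK2 t).le)
    rwa [measureReal_restrict_apply_univ, measureReal_def] at this
  have bn2 : ‖∫ t, pmK2 0 t ∂(μn.restrict s)‖ ≤ 4 * (μn s).toReal := by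
    have := norm_integral_le_of_norm_le_const (μ := μn.restrict s)
      (f := fun t => pmK2 0 t) (C := 4) (Eventually.of_forall fun t => (hK2 t).le)
    rwa [measureReal_restrict_apply_univ, measureReal_def] at this
  constructor
  · rw [hd1, hJ]
    calc ‖(∫ t, pmK1 0 t ∂(μp.restrict s)) - (∫ t, pmK1 0 t ∂(μn.restrict s))‖
        ≤ ‖∫ t, pmK1 0 t ∂(μp.restrict s)‖ + ‖∫ t, pmK1 0 t ∂(μn.restrict s)‖ := norm_sub_le _ _
    _ ≤ 2 * (μp s).toReal + 2 * (μn s).toReal := add_le_add bp1 bn1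
    _ ≤ m := by linarith
  · rw [hd2]
    calc ‖(∫ t, pmK2 0 t ∂(μp.restrict s)) - (∫ t, pmK2 0 t ∂(μn.restrict s))‖
        ≤ ‖∫ t, pmK2 0 t ∂(μp.restrict s)‖ + ‖∫ t, pmK2 0 t ∂(μn.restrict s)‖ := norm_sub_le _ _
    _ ≤ 4 * (μp s).toReal + 4 * (μn s).toReal := add_le_add bp2 bn2
    _ ≤ 2 * m := by linarith

lemma comp_chain (f g : ℂ → ℂ) (hf : AnalyticOnNhd ℂ f unitDisk)
    (hg : AnalyticOnNhd ℂ g unitDisk) (hg0 : g 0 = 0) (hf'0 : deriv f 0 = 1)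
    (hg'0 : deriv g 0 = 1) (hcomp : ∀ w : ℂ, ‖w‖ < 1 / 4 → f (g w) = w) :
    deriv (deriv f) 0 + deriv (deriv g) 0 = 0 ∧
    deriv (deriv (deriv f)) 0 + 3 * deriv (deriv f) 0 * deriv (deriv g) 0 +
      deriv (deriv (deriv g)) 0 = 0 := by
  have mem0 : (0:ℂ) ∈ unitDisk := by simp [unitDisk]
  have hfd : AnalyticOnNhd ℂ (deriv f) unitDisk := hf.deriv
  have hfdd : AnalyticOnNhd ℂ (deriv (deriv f)) unitDisk := hfd.deriv
  have hgd : AnalyticOnNhd ℂ (deriv g) unitDisk := hg.deriv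
  have hgdd : AnalyticOnNhd ℂ (deriv (deriv g)) unitDisk := hgd.deriv
  have hgood : ∀ᶠ z in 𝓝 (0:ℂ), g z ∈ unitDisk ∧ z ∈ unitDisk := by
    have hc : ContinuousAt g 0 := (hg 0 mem0).continuousAt
    have h1 : ∀ᶠ z in 𝓝 (0:ℂ), g z ∈ unitDisk := by
      have : unitDisk ∈ 𝓝 (g 0) := by
        rw [hg0]; exact Metric.isOpen_ball.mem_nhds mem0
      exact hc.eventually_mem this
    exact h1.and (eventually_of_mem (Metric.isOpen_ball.mem_nhds mem0) fun z hz => hz)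
  have e1 : deriv (fun z => f (g z)) =ᶠ[𝓝 0] fun z => deriv f (g z) * deriv g z := by
    filter_upwards [hgood] with z hz
    have := HasDerivAt.comp z ((hf _ hz.1).differentiableAt.hasDerivAt)
      ((hg _ hz.2).differentiableAt.hasDerivAt)
    exact this.deriv
  have hid : (fun z => f (g z)) =ᶠ[𝓝 (0:ℂ)] fun z => z := by
    have : ball (0:ℂ) (1/4) ∈ 𝓝 (0:ℂ) := Metric.isOpen_ball.mem_nhds (by norm_num)
    filter_upwards [this] with z hz
    exact hcomp z (by rwa [← mem_ball_zero_iff])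
  have h1const : (fun z => deriv f (g z) * deriv g z) =ᶠ[𝓝 (0:ℂ)] fun _ => (1:ℂ) := by
    refine e1.symm.trans (hid.deriv.trans ?_)
    filter_upwards with z
    simp
  have hgd0 : HasDerivAt g 1 0 := by
    simpa [hg'0] using (hg 0 mem0).differentiableAt.hasDerivAt
  have hgd0' : HasDerivAt (deriv g) (deriv (deriv g) 0) 0 :=
    (hgd 0 mem0).differentiableAt.hasDerivAt
  have hgdd0 : HasDerivAt (deriv (deriv g)) (deriv (deriv (deriv g)) 0) 0 :=
    (hgdd 0 mem0).differentiableAt.hasDerivAt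
  have hD1 : HasDerivAt (fun z => deriv f (g z)) (deriv (deriv f) 0 * 1) 0 := by
    have h : HasDerivAt (deriv f) (deriv (deriv f) 0) (g 0) := by
      rw [hg0]; exact (hfd 0 mem0).differentiableAt.hasDerivAt
    exact h.comp 0 hgd0
  have hDD1 : HasDerivAt (fun z => deriv (deriv f) (g z)) (deriv (deriv (deriv f)) 0 * 1) 0 := by
    have h : HasDerivAt (deriv (deriv f)) (deriv (deriv (deriv f)) 0) (g 0) := by
      rw [hg0]; exact (hfdd 0 mem0).differentiableAt.hasDerivAt
    exact h.comp 0 hgd0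
  -- first relation
  have rel1 : deriv (deriv f) 0 + deriv (deriv g) 0 = 0 := by
    have hD : HasDerivAt (fun z => deriv f (g z) * deriv g z)
        (deriv (deriv f) 0 * 1 * deriv g 0 + deriv f (g 0) * deriv (deriv g) 0) 0 :=
      hD1.mul hgd0'
    have heq : deriv (fun z => deriv f (g z) * deriv g z) 0
        = deriv (fun _ : ℂ => (1:ℂ)) 0 := h1const.deriv_eq
    rw [hD.deriv, deriv_const] at heq
    rw [hg0, hf'0, hg'0] at heq
    linear_combination heq
  -- second derivative identity
  have e2 : deriv (fun z => deriv f (g z) * deriv g z) =ᶠ[𝓝 (0:ℂ)]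
      fun z => deriv (deriv f) (g z) * deriv g z * deriv g z
        + deriv f (g z) * deriv (deriv g) z := by
    filter_upwards [hgood] with z hz
    have c1 : HasDerivAt (fun w => deriv f (g w)) (deriv (deriv f) (g z) * deriv g z) z :=
      HasDerivAt.comp z ((hfd _ hz.1).differentiableAt.hasDerivAt)
        ((hg _ hz.2).differentiableAt.hasDerivAt)
    exact (c1.mul (hgd _ hz.2).differentiableAt.hasDerivAt).deriv
  have h2const : (fun z => deriv (deriv f) (g z) * deriv g z * deriv g z
      + deriv f (g z) * deriv (deriv g) z) =ᶠ[𝓝 (0:ℂ)] fun _ => (0:ℂ) := by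
    refine e2.symm.trans (h1const.deriv.trans ?_)
    filter_upwards with z
    simp
  -- second relation
  have t1 : HasDerivAt (fun z => deriv (deriv f) (g z) * deriv g z)
      (deriv (deriv (deriv f)) 0 * 1 * deriv g 0 + deriv (deriv f) (g 0) * deriv (deriv g) 0) 0 :=
    hDD1.mul hgd0'
  have t1' : HasDerivAt (fun z => deriv (deriv f) (g z) * deriv g z * deriv g z)
      ((deriv (deriv (deriv f)) 0 * 1 * deriv g 0 + deriv (deriv f) (g 0) * deriv (deriv g) 0)
        * deriv g 0 + (deriv (deriv f) (g 0) * deriv g 0) * deriv (deriv g) 0) 0 :=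
    t1.mul hgd0'
  have t2 : HasDerivAt (fun z => deriv f (g z) * deriv (deriv g) z)
      (deriv (deriv f) 0 * 1 * deriv (deriv g) 0 + deriv f (g 0) * deriv (deriv (deriv g)) 0) 0 :=
    hD1.mul hgdd0
  have tt := t1'.fun_add t2
  have heq2 : deriv (fun z => deriv (deriv f) (g z) * deriv g z * deriv g z
      + deriv f (g z) * deriv (deriv g) z) 0 = deriv (fun _ : ℂ => (0:ℂ)) 0 := h2const.deriv_eq
  rw [tt.deriv, deriv_const] at heq2
  rw [hg0, hf'0, hg'0] at heq2
  exact ⟨rel1, by linear_combination heq2⟩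

/-- Example 2.1: the case `k(z) = z/(1-z)²` of Corollary 2.1, i.e. `f' ∈ P_m` and
`g' ∈ P_m`. -/
theorem BR_koebe_bounds (m : ℝ) (hm : 2 ≤ m) (f g : ℂ → ℂ)
    (hfg : BiUnivalentPair f g)
    (hf' : MemPm m (deriv f)) (hg' : MemPm m (deriv g)) :
    ‖mc f 2‖ ≤ Real.sqrt (m / 3) ∧
      ‖mc f 3‖ ≤ m / 3 ∧
      ‖2 * mc f 2 ^ 2 - mc f 3‖ ≤ m / 3 := by
  obtain ⟨hfA, hf0, hf'0, hfinj, hgA, hginj, hg0, hcomp⟩ := hfg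
  have hg'0 : deriv g 0 = 1 := hg'.2.1
  obtain ⟨rel1, rel2⟩ := comp_chain f g hfA hgA hg0 hf'0 hg'0 hcomp
  obtain ⟨hF2, hF3⟩ := hf'.deriv_bound
  obtain ⟨hG2, hG3⟩ := hg'.deriv_bound
  have hit2 : iteratedDeriv 2 f = deriv (deriv f) := by
    rw [iteratedDeriv_succ, iteratedDeriv_one]
  have hit3 : iteratedDeriv 3 f = deriv (deriv (deriv f)) := by
    rw [iteratedDeriv_succ, iteratedDeriv_succ, iteratedDeriv_one]
  have hm2 : mc f 2 = deriv (deriv f) 0 / 2 := by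
    rw [mc, hit2]; norm_num [Nat.factorial]
  have hm3 : mc f 3 = deriv (deriv (deriv f)) 0 / 6 := by
    rw [mc, hit3]; norm_num [Nat.factorial]
  have key3 : 2 * mc f 2 ^ 2 - mc f 3 = deriv (deriv (deriv g)) 0 / 6 := by
    rw [hm2, hm3]
    linear_combination (deriv (deriv f) 0 / 2) * rel1 - (1/6 : ℂ) * rel2
  have habs : ∀ x : ℂ, ‖x‖ = ‖x‖ := fun x => rfl
  have h6 : ‖(6:ℂ)‖ = 6 := by norm_num
  have habs3 : ‖mc f 3‖ ≤ m / 3 := by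
    rw [habs, hm3, norm_div, h6]
    linarith
  have habsb3 : ‖2 * mc f 2 ^ 2 - mc f 3‖ ≤ m / 3 := by
    rw [habs, key3, norm_div, h6]
    linarith
  refine ⟨?_, habs3, habsb3⟩
  have h2sq : ‖mc f 2‖ ^ 2 ≤ m / 3 := by
    have he : (2:ℝ) * ‖mc f 2‖ ^ 2 = ‖2 * mc f 2 ^ 2‖ := by
      rw [norm_mul, norm_pow]; norm_num
    have hb : ‖2 * mc f 2 ^ 2‖ ≤ 2 * (m / 3) := by
      calc ‖2 * mc f 2 ^ 2‖ = ‖(2 * mc f 2 ^ 2 - mc f 3) + mc f 3‖ := by ring_nf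
      _ ≤ ‖2 * mc f 2 ^ 2 - mc f 3‖ + ‖mc f 3‖ := norm_add_le _ _
      _ ≤ m / 3 + m / 3 := add_le_add (by rw [← habs]; exact habsb3) (by rw [← habs]; exact habs3)
      _ = 2 * (m / 3) := by ring
    linarith [he ▸ hb]
  rw [habs]
  calc ‖mc f 2‖ = Real.sqrt (‖mc f 2‖ ^ 2) := (Real.sqrt_sq (norm_nonneg _)).symm
  _ ≤ Real.sqrt (m / 3) := Real.sqrt_le_sqrt h2sq
end
end
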